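/- (Lemma 3.3, specialization of the B_2 polynomials.) For all i, j ∈ I_M one has B_{2,i}(z_j, Λ) = N_i(Λ) · Φ_q(ī | j̄ ; q^{−M}, Λ^{−1}), where ī = (i_1,…,i_{N−1}) and j̄ = (j_1,…,j_{N−1}). -/

import Mathlib

/-!
Lemma 3.3: specialization of the `B₂` polynomials,
`B_{2,i}(z_j, Λ) = N_i(Λ) · Φ_q(ī|j̄; q^{−M}, Λ^{−1})`.
Tuples `i ∈ I_M` are encoded 0-based as `i : Fin N → ℕ` with `∑ i_a = M`;
the point `z_j` has coordinates `z_{j,a} = q^{j_1+⋯+j_{a−1}}` (1-based), i.e.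
`zfun j a = q^{∑_{b<a} j_b}` for `0 ≤ a < N` (0-based), with the convention
`z_{N+1} = Λ·z_1`, i.e. `zfun j N = Λ`.
-/

noncomputable section
open scoped Classical

def qPochGen (q u : ℂ) (m : ℕ) : ℂ := ∏ k ∈ Finset.range m, (1 - u * q ^ k)

def qPoch (q : ℂ) (m : ℕ) : ℂ := ∏ k ∈ Finset.range m, (1 - q ^ (k + 1))

def isum {n : ℕ} (i : Fin n → ℤ) : ℤ := ∑ a, i a

def ipair {n : ℕ} (i j : Fin n → ℤ) : ℤ :=
  ∑ a, ∑ b, if a < b then i a * j b else 0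

/-- the function `Φ_q(γ|β;λ,μ)`. -/
def Phi (q : ℂ) {n : ℕ} (γ β : Fin n → ℤ) (lam mu : ℂ) : ℂ :=
  if 0 ≤ γ ∧ γ ≤ β then
    q ^ (ipair (β - γ) γ) * (mu / lam) ^ (isum γ).toNat
      * qPochGen q lam (isum γ).toNat
      * qPochGen q (mu / lam) (isum β - isum γ).toNat
      / qPochGen q mu (isum β).toNat
      * ∏ a, (qPoch q (β a).toNat / (qPoch q (γ a).toNat * qPoch q (β a - γ a).toNat))
  else 0

/-- the coordinates of the reference point `z_j`, extended by `z_{N+1} = Λ` via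
the slot `a = N`:  `zfun j a = q^{j_1+⋯+j_a}` for `a < N` (0-based) and
`zfun j N = Λ`. -/
def zfun (q Λ : ℂ) (N : ℕ) (j : Fin N → ℕ) (a : ℕ) : ℂ :=
  if a < N then q ^ (∑ b : Fin N, if (b : ℕ) < a then j b else 0) else Λ

/-- `B_{2,i}(z_j,Λ) = ∏_{a=1}^{N} ∏_{k=0}^{i_a−1} (z_{a+1} − q^k z_a)` evaluated
at the point `z_j`. -/
def B2 (q Λ : ℂ) (N : ℕ) (i j : Fin N → ℕ) : ℂ :=
  ∏ a : Fin N, ∏ k ∈ Finset.range (i a),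
    (zfun q Λ N j ((a : ℕ) + 1) - q ^ k * zfun q Λ N j (a : ℕ))

/-- `N_i(Λ) = (Λ⁻¹;q)_M Λ^M (q;q)_M⁻¹ ∏_a (q;q)_{i_a}`. -/
def Npoly (q Λ : ℂ) (N M : ℕ) (i : Fin N → ℕ) : ℂ :=
  qPochGen q Λ⁻¹ M * Λ ^ M / qPoch q M * ∏ a : Fin N, qPoch q (i a)

open Fin.NatCast in
/-- truncation `ī = (i_1,…,i_{N−1})` of a tuple `i ∈ I_M`. -/
def ibar (N : ℕ) [NeZero N] (i : Fin N → ℕ) : Fin (N - 1) → ℤ :=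
  fun a => (i (((a : ℕ)) : Fin N) : ℤ)

/- ### helper lemmas -/

lemma two_mul_sum_range (m : ℕ) : (2:ℤ) * ∑ k ∈ Finset.range m, (k:ℤ) = m * (m - 1) := by
  induction m with
  | zero => simp
  | succ m ih => rw [Finset.sum_range_succ, mul_add, ih]; push_cast; ring

lemma qPochGen_add (q u : ℂ) (a b : ℕ) :
    qPochGen q u (a + b) = qPochGen q u a * qPochGen q (u * q ^ a) b := by
  unfold qPochGen
  rw [Finset.prod_range_add]
  congr 1
  refine Finset.prod_congr rfl fun k _ => ?_
  rw [pow_add]; ring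

lemma qPoch_ne_zero {q : ℂ} (hq : ∀ m : ℕ, 0 < m → q ^ m ≠ 1) (m : ℕ) : qPoch q m ≠ 0 := by
  refine Finset.prod_ne_zero_iff.2 fun k _ => ?_
  have h := hq (k+1) (Nat.succ_pos k)
  intro h0
  exact h (by linear_combination -h0)

lemma qPoch_ratio (q : ℂ) (m j : ℕ) (h : m ≤ j) :
    qPoch q j = qPoch q (j - m) * ∏ k ∈ Finset.range m, (1 - q ^ (j - k)) := by
  obtain ⟨d, rfl⟩ : ∃ d, j = d + m := ⟨j - m, by omega⟩
  rw [Nat.add_sub_cancel]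
  unfold qPoch
  rw [Finset.prod_range_add, ← Finset.prod_range_reflect (fun k => 1 - q ^ (d + m - k)) m]
  congr 1
  refine Finset.prod_congr rfl fun k hk => ?_
  simp only [Finset.mem_range] at hk
  have : d + m - (m - 1 - k) = d + k + 1 := by omega
  rw [this]

lemma sum_swap_lt {n : ℕ} (x : Fin n → ℤ) :
    ∑ a, ∑ b, (if b < a then x a * x b else 0) = ∑ a, ∑ b, (if a < b then x a * x b else 0) := by
  rw [Finset.sum_comm]
  exact Finset.sum_congr rfl fun a _ => Finset.sum_congr rfl fun b _ => by rw [mul_comm]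

lemma sq_sum {n : ℕ} (x : Fin n → ℤ) :
    (∑ a, x a) * (∑ a, x a)
      = ∑ a, x a * x a + 2 * ∑ a, ∑ b, (if a < b then x a * x b else 0) := by
  rw [Finset.sum_mul_sum]
  have key : ∀ a b : Fin n, x a * x b
      = (if a < b then x a * x b else 0) + (if b < a then x a * x b else 0)
        + (if a = b then x a * x b else 0) := by
    intro a b
    rcases lt_trichotomy a b with h | h | h
    · simp [h, h.ne, not_lt.2 h.le]
    · simp [h]
    · simp [h, h.ne', not_lt.2 h.le]
  calc ∑ a, ∑ b, x a * x b
      = ∑ a, ∑ b, ((if a < b then x a * x b else 0) + (if b < a then x a * x b else 0)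
        + (if a = b then x a * x b else 0)) :=
        Finset.sum_congr rfl fun a _ => Finset.sum_congr rfl fun b _ => key a b
    _ = ∑ a, x a * x a + 2 * ∑ a, ∑ b, (if a < b then x a * x b else 0) := by
        simp only [Finset.sum_add_distrib, sum_swap_lt]
        have h2 : ∀ a : Fin n, ∑ b, (if a = b then x a * x b else 0) = x a * x a := by
          intro a; rw [Finset.sum_ite_eq]; simp
        rw [Finset.sum_congr rfl fun a _ => h2 a]
        ring

lemma sum_S_mul {n : ℕ} (xj xi : Fin n → ℤ) :
    ∑ a, (∑ b, if b < a then xj b else 0) * xi a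
      = ∑ a, ∑ b, (if a < b then xj a * xi b else 0) := by
  have h : ∀ a : Fin n, (∑ b, if b < a then xj b else 0) * xi a
      = ∑ b, (if b < a then xj b * xi a else 0) := by
    intro a
    rw [Finset.sum_mul]
    refine Finset.sum_congr rfl fun b _ => ?_
    split <;> simp
  rw [Finset.sum_congr rfl fun a _ => h a, Finset.sum_comm]

lemma prodA (q : ℂ) (hq : ∀ m : ℕ, 0 < m → q ^ m ≠ 1) (m jv : ℕ) (h : m ≤ jv) :
    ∏ k ∈ Finset.range m, (q ^ jv - q ^ k)
      = (-1)^m * q ^ (∑ k ∈ Finset.range m, k) * (qPoch q jv / qPoch q (jv - m)) := by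
  have step : ∀ k ∈ Finset.range m, q ^ jv - q ^ k = q ^ k * (-1) * (1 - q ^ (jv - k)) := by
    intro k hk; simp only [Finset.mem_range] at hk
    have hkk : q ^ k * q ^ (jv - k) = q ^ jv := by rw [← pow_add]; congr 1; omega
    linear_combination -hkk
  rw [Finset.prod_congr rfl step, Finset.prod_mul_distrib, Finset.prod_mul_distrib,
      Finset.prod_pow_eq_pow_sum, Finset.prod_const, Finset.card_range,
      qPoch_ratio q m jv h]
  have hnz := qPoch_ne_zero hq (jv - m)
  rw [mul_div_cancel_left₀ _ hnz]
  ring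

lemma prod_zpow_sum (q : ℂ) (hq0 : q ≠ 0) (s : Finset ℕ) (f : ℕ → ℤ) :
    ∏ k ∈ s, q ^ (f k) = q ^ (∑ k ∈ s, f k) := by
  classical
  induction s using Finset.induction_on with
  | empty => simp
  | @insert a s' ha ih =>
      rw [Finset.prod_insert ha, Finset.sum_insert ha, zpow_add₀ hq0, ih]

lemma prodC (q : ℂ) (hq0 : q ≠ 0) (hq : ∀ m : ℕ, 0 < m → q ^ m ≠ 1) (G M : ℕ) (h : G ≤ M) :
    qPochGen q (q ^ (-(M:ℤ))) G
      = (-1)^G * q ^ ((∑ k ∈ Finset.range G, (k:ℤ)) - M * G) * (qPoch q M / qPoch q (M - G)) := by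
  unfold qPochGen
  have step : ∀ k ∈ Finset.range G, (1 - q ^ (-(M:ℤ)) * q ^ k)
      = (-1) * q ^ ((k:ℤ) - M) * (1 - q ^ (M - k)) := by
    intro k hk; simp only [Finset.mem_range] at hk
    have h1 : q ^ ((k:ℤ) - M) * q ^ (((M - k : ℕ)) : ℤ) = 1 := by
      rw [← zpow_add₀ hq0, show ((k:ℤ) - M) + ((M - k : ℕ) : ℤ) = 0 by omega, zpow_zero]
    have h2 : q ^ (-(M:ℤ)) * (q:ℂ) ^ k = q ^ ((k:ℤ) - M) := by
      rw [← zpow_natCast q k, ← zpow_add₀ hq0]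
      congr 1; ring
    rw [zpow_natCast] at h1
    linear_combination - h1 - h2
  rw [Finset.prod_congr rfl step, Finset.prod_mul_distrib, Finset.prod_mul_distrib,
      Finset.prod_const, Finset.card_range, prod_zpow_sum q hq0,
      show (∑ k ∈ Finset.range G, ((k:ℤ) - M)) = (∑ k ∈ Finset.range G, (k:ℤ)) - M * G by
        rw [Finset.sum_sub_distrib, Finset.sum_const, Finset.card_range]; ring,
      qPoch_ratio q G M h]
  have hnz := qPoch_ne_zero hq (M - G)
  rw [mul_div_cancel_left₀ _ hnz]

lemma qPochGen_inv_ne_zero {q Λ : ℂ} {M : ℕ} (hΛ0 : Λ ≠ 0)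
    (hΛ : ∀ m : ℕ, m < M → Λ ≠ q ^ m) (m : ℕ) (hm : m ≤ M) : qPochGen q Λ⁻¹ m ≠ 0 := by
  refine Finset.prod_ne_zero_iff.2 fun k hk => ?_
  simp only [Finset.mem_range] at hk
  intro h0
  have hk' : Λ⁻¹ * q ^ k = 1 := by linear_combination -h0
  have hXX : Λ = q ^ k := by
    field_simp at hk'
    exact hk'.symm
  exact hΛ k (by omega) hXX

/- ### main auxiliary theorem -/

set_option maxHeartbeats 2000000 in
theorem mainAux (q : ℂ) (hq0 : q ≠ 0) (hq : ∀ m : ℕ, 0 < m → q ^ m ≠ 1)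
    (n M : ℕ) (Λ : ℂ) (hΛ0 : Λ ≠ 0) (hΛ : ∀ m : ℕ, m < M → Λ ≠ q ^ m)
    (i j : Fin (n+1) → ℕ) (hi : ∑ a, i a = M) (hj : ∑ a, j a = M) :
    B2 q Λ (n+1) i j
      = Npoly q Λ (n+1) M i *
        Phi q (fun a : Fin n => (i a.castSucc : ℤ)) (fun a : Fin n => (j a.castSucc : ℤ))
          (q ^ (-(M : ℤ))) Λ⁻¹ := by
  have hz : ∀ t : ℕ, zfun q Λ (n+1) j t
      = if t < n+1 then q ^ (∑ b : Fin (n+1), if (b:ℕ) < t then j b else 0) else Λ :=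
    fun t => rfl
  have hSsucc : ∀ a : Fin n,
      (∑ b : Fin (n+1), if (b:ℕ) < (a:ℕ)+1 then j b else 0)
        = (∑ b : Fin (n+1), if (b:ℕ) < (a:ℕ) then j b else 0) + j a.castSucc := by
    intro a
    have hpt : ∀ b : Fin (n+1), (if (b:ℕ) < (a:ℕ)+1 then j b else 0)
        = (if (b:ℕ) < (a:ℕ) then j b else 0) + (if b = a.castSucc then j b else 0) := by
      intro b
      have hb : (b = a.castSucc) ↔ ((b:ℕ) = (a:ℕ)) := by
        rw [Fin.ext_iff, Fin.coe_castSucc]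
      simp only [hb]
      split_ifs <;> omega
    rw [Finset.sum_congr rfl fun b _ => hpt b, Finset.sum_add_distrib,
        Finset.sum_ite_eq' Finset.univ a.castSucc j, if_pos (Finset.mem_univ _)]
  have hSn : (∑ b : Fin (n+1), if (b:ℕ) < n then j b else 0) = ∑ a : Fin n, j a.castSucc := by
    rw [Fin.sum_univ_castSucc (f := fun b : Fin (n+1) => if (b:ℕ) < n then j b else 0)]
    simp only [Fin.coe_castSucc, Fin.val_last, lt_irrefl, if_false, add_zero]
    exact Finset.sum_congr rfl fun b _ => if_pos b.isLt
  have hSval : ∀ a : Fin n,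
      (∑ b : Fin (n+1), if (b:ℕ) < (a:ℕ) then j b else 0)
        = ∑ b : Fin n, if b < a then j b.castSucc else 0 := by
    intro a
    rw [Fin.sum_univ_castSucc (f := fun b : Fin (n+1) => if (b:ℕ) < (a:ℕ) then j b else 0)]
    simp only [Fin.coe_castSucc, Fin.val_last]
    rw [if_neg (by have := a.isLt; omega), add_zero]
    exact Finset.sum_congr rfl fun b _ => by simp only [Fin.lt_def]
  by_cases hle : ∀ a : Fin n, i a.castSucc ≤ j a.castSucc
  · -- main case
    have hil : (∑ a : Fin n, i a.castSucc) + i (Fin.last n) = M := by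
      rw [← hi, Fin.sum_univ_castSucc]
    have hjl : (∑ a : Fin n, j a.castSucc) + j (Fin.last n) = M := by
      rw [← hj, Fin.sum_univ_castSucc]
    have hGB : (∑ a : Fin n, i a.castSucc) ≤ ∑ a : Fin n, j a.castSucc :=
      Finset.sum_le_sum fun a _ => hle a
    have hGM : (∑ a : Fin n, i a.castSucc) ≤ M := by omega
    have hjlil : j (Fin.last n) ≤ i (Fin.last n) := by omega
    have hpoch := qPoch_ne_zero hq
    have hBnz : qPochGen q Λ⁻¹ (∑ a : Fin n, j a.castSucc) ≠ 0 :=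
      qPochGen_inv_ne_zero hΛ0 hΛ _ (by omega)
    have hQ : qPochGen q Λ⁻¹ (∑ a : Fin n, j a.castSucc)
          * qPochGen q (Λ⁻¹ * q ^ (∑ a : Fin n, j a.castSucc)) (i (Fin.last n))
        = qPochGen q Λ⁻¹ M * qPochGen q (Λ⁻¹ * q ^ M) (i (Fin.last n) - j (Fin.last n)) := by
      rw [← qPochGen_add, ← qPochGen_add,
        show (∑ a : Fin n, j a.castSucc) + i (Fin.last n)
          = M + (i (Fin.last n) - j (Fin.last n)) by omega]
    have hQ' : qPochGen q (Λ⁻¹ * q ^ (∑ a : Fin n, j a.castSucc)) (i (Fin.last n))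
        = qPochGen q Λ⁻¹ M * qPochGen q (Λ⁻¹ * q ^ M) (i (Fin.last n) - j (Fin.last n))
          / qPochGen q Λ⁻¹ (∑ a : Fin n, j a.castSucc) := by
      rw [eq_div_iff hBnz]
      linear_combination hQ
    -- claim 1 : closed form of the left-hand side
    have claim1 : B2 q Λ (n+1) i j
        = q ^ ((∑ a : Fin n, (∑ b : Fin n, if b < a then j b.castSucc else 0) * i a.castSucc)
              + ∑ a : Fin n, ∑ k ∈ Finset.range (i a.castSucc), k)
          * ((-1) ^ (∑ a : Fin n, i a.castSucc) * Λ ^ (i (Fin.last n))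
          * (qPochGen q Λ⁻¹ M * qPochGen q (Λ⁻¹ * q ^ M) (i (Fin.last n) - j (Fin.last n))
              / qPochGen q Λ⁻¹ (∑ a : Fin n, j a.castSucc))
          * ((∏ a : Fin n, qPoch q (j a.castSucc))
              / ∏ a : Fin n, qPoch q (j a.castSucc - i a.castSucc))) := by
      unfold B2
      rw [Fin.prod_univ_castSucc]
      have hlast : ∏ k ∈ Finset.range (i (Fin.last n)),
          (zfun q Λ (n+1) j ((Fin.last n : ℕ) + 1) - q ^ k * zfun q Λ (n+1) j (Fin.last n : ℕ))
          = Λ ^ (i (Fin.last n))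
            * qPochGen q (Λ⁻¹ * q ^ (∑ a : Fin n, j a.castSucc)) (i (Fin.last n)) := by
        have e : ∀ k ∈ Finset.range (i (Fin.last n)),
            (zfun q Λ (n+1) j ((Fin.last n : ℕ) + 1) - q ^ k * zfun q Λ (n+1) j (Fin.last n : ℕ))
            = Λ * (1 - (Λ⁻¹ * q ^ (∑ a : Fin n, j a.castSucc)) * q ^ k) := by
          intro k _
          rw [Fin.val_last, hz (n+1), hz n, if_neg (lt_irrefl _), if_pos (Nat.lt_succ_self n), hSn]
          have hinv : Λ * Λ⁻¹ = 1 := mul_inv_cancel₀ hΛ0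
          linear_combination (q ^ (∑ a : Fin n, j a.castSucc) * q ^ k) * hinv
        rw [Finset.prod_congr rfl e, Finset.prod_mul_distrib, Finset.prod_const,
          Finset.card_range]
        rfl
      have hmain : ∀ a : Fin n, ∏ k ∈ Finset.range (i a.castSucc),
          (zfun q Λ (n+1) j ((a.castSucc : ℕ) + 1) - q ^ k * zfun q Λ (n+1) j (a.castSucc : ℕ))
          = q ^ ((∑ b : Fin n, if b < a then j b.castSucc else 0) * i a.castSucc)
            * ((-1) ^ (i a.castSucc) * q ^ (∑ k ∈ Finset.range (i a.castSucc), k)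
              * (qPoch q (j a.castSucc) / qPoch q (j a.castSucc - i a.castSucc))) := by
        intro a
        have ha := a.isLt
        have e : ∀ k ∈ Finset.range (i a.castSucc),
            (zfun q Λ (n+1) j ((a.castSucc : ℕ) + 1) - q ^ k * zfun q Λ (n+1) j (a.castSucc : ℕ))
            = q ^ (∑ b : Fin (n+1), if (b:ℕ) < (a:ℕ) then j b else 0)
              * (q ^ (j a.castSucc) - q ^ k) := by
          intro k _
          simp only [Fin.coe_castSucc]
          rw [hz ((a:ℕ)+1), hz (a:ℕ), if_pos (by omega), if_pos (by omega), hSsucc a, pow_add]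
          ring
        rw [Finset.prod_congr rfl e, Finset.prod_mul_distrib, Finset.prod_const,
          Finset.card_range, ← pow_mul, prodA q hq _ _ (hle a), hSval a]
      rw [Finset.prod_congr rfl fun a _ => hmain a, hlast, hQ']
      simp only [Finset.prod_mul_distrib, Finset.prod_pow_eq_pow_sum, Finset.prod_div_distrib]
      rw [pow_add]
      ring
    -- exponent identity
    have e4 : (∑ a : Fin n, (∑ b : Fin n, if b < a then (j b.castSucc:ℤ) else 0) * (i a.castSucc:ℤ))
        = ∑ a : Fin n, ∑ b : Fin n, (if a < b then (j a.castSucc:ℤ) * (i b.castSucc:ℤ) else 0) :=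
      sum_S_mul _ _
    have e3 : (∑ a : Fin n, (i a.castSucc:ℤ)) * (∑ a : Fin n, (i a.castSucc:ℤ))
        = ∑ a : Fin n, (i a.castSucc:ℤ) * (i a.castSucc:ℤ)
          + 2 * ∑ a : Fin n, ∑ b : Fin n, (if a < b then (i a.castSucc:ℤ) * (i b.castSucc:ℤ) else 0) :=
      sq_sum _
    have e1 : (2:ℤ) * ∑ a : Fin n, ∑ k ∈ Finset.range (i a.castSucc), (k:ℤ)
        = ∑ a : Fin n, ((i a.castSucc:ℤ) * ((i a.castSucc:ℤ) - 1)) := by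
      rw [Finset.mul_sum]
      exact Finset.sum_congr rfl fun a _ => two_mul_sum_range _
    have e2 : (2:ℤ) * ∑ k ∈ Finset.range (∑ a : Fin n, i a.castSucc), (k:ℤ)
        = ((∑ a : Fin n, i a.castSucc : ℕ):ℤ) * (((∑ a : Fin n, i a.castSucc : ℕ):ℤ) - 1) :=
      two_mul_sum_range _
    have e5 : ipair ((fun a : Fin n => (j a.castSucc : ℤ)) - fun a : Fin n => (i a.castSucc : ℤ))
          (fun a : Fin n => (i a.castSucc : ℤ))
        = (∑ a : Fin n, ∑ b : Fin n, (if a < b then (j a.castSucc:ℤ) * (i b.castSucc:ℤ) else 0))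
          - ∑ a : Fin n, ∑ b : Fin n, (if a < b then (i a.castSucc:ℤ) * (i b.castSucc:ℤ) else 0) := by
      unfold ipair
      rw [← Finset.sum_sub_distrib]
      refine Finset.sum_congr rfl fun a _ => ?_
      rw [← Finset.sum_sub_distrib]
      refine Finset.sum_congr rfl fun b _ => ?_
      simp only [Pi.sub_apply]
      split <;> ring
    have e6 : ∑ a : Fin n, ((i a.castSucc:ℤ) * ((i a.castSucc:ℤ) - 1))
        = ∑ a : Fin n, (i a.castSucc:ℤ) * (i a.castSucc:ℤ) - ∑ a : Fin n, (i a.castSucc:ℤ) := by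
      rw [← Finset.sum_sub_distrib]
      exact Finset.sum_congr rfl fun a _ => by ring
    have e7 : ((∑ a : Fin n, i a.castSucc : ℕ) : ℤ) = ∑ a : Fin n, (i a.castSucc:ℤ) := by
      push_cast; rfl
    have hexp : ((∑ a : Fin n, (∑ b : Fin n, if b < a then (j b.castSucc:ℤ) else 0) * (i a.castSucc:ℤ))
          + ∑ a : Fin n, ∑ k ∈ Finset.range (i a.castSucc), (k:ℤ))
        = ipair ((fun a : Fin n => (j a.castSucc : ℤ)) - fun a : Fin n => (i a.castSucc : ℤ))
            (fun a : Fin n => (i a.castSucc : ℤ))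
          + ∑ k ∈ Finset.range (∑ a : Fin n, i a.castSucc), (k:ℤ) := by
      have h2 : (2:ℤ) * ((∑ a : Fin n, (∑ b : Fin n, if b < a then (j b.castSucc:ℤ) else 0) * (i a.castSucc:ℤ))
            + ∑ a : Fin n, ∑ k ∈ Finset.range (i a.castSucc), (k:ℤ))
          = 2 * (ipair ((fun a : Fin n => (j a.castSucc : ℤ)) - fun a : Fin n => (i a.castSucc : ℤ))
              (fun a : Fin n => (i a.castSucc : ℤ))
            + ∑ k ∈ Finset.range (∑ a : Fin n, i a.castSucc), (k:ℤ)) := by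
        linear_combination 2*e4 + e1 + e6 - 2*e5 - e2
          - (((∑ a : Fin n, i a.castSucc : ℕ):ℤ) + (∑ a : Fin n, (i a.castSucc:ℤ)) - 1)*e7 - e3
      linarith [h2]
    have hqpow : (q:ℂ) ^ ((∑ a : Fin n, (∑ b : Fin n, if b < a then j b.castSucc else 0) * i a.castSucc)
          + ∑ a : Fin n, ∑ k ∈ Finset.range (i a.castSucc), k)
        = q ^ (ipair ((fun a : Fin n => (j a.castSucc : ℤ)) - fun a : Fin n => (i a.castSucc : ℤ))
            (fun a : Fin n => (i a.castSucc : ℤ)))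
          * q ^ ((∑ k ∈ Finset.range (∑ a : Fin n, i a.castSucc), (k:ℤ)) - M * (∑ a : Fin n, i a.castSucc))
          * q ^ (M * (∑ a : Fin n, i a.castSucc)) := by
      rw [← zpow_natCast q ((∑ a : Fin n, (∑ b : Fin n, if b < a then j b.castSucc else 0) * i a.castSucc)
            + ∑ a : Fin n, ∑ k ∈ Finset.range (i a.castSucc), k),
          ← zpow_natCast q (M * (∑ a : Fin n, i a.castSucc)),
          ← zpow_add₀ hq0, ← zpow_add₀ hq0]
      congr 1
      push_cast
      linarith [hexp]
    have hisumγ : isum (fun a : Fin n => (i a.castSucc:ℤ)) = ((∑ a : Fin n, i a.castSucc : ℕ) : ℤ) := by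
      unfold isum; push_cast; rfl
    have hisumβ : isum (fun a : Fin n => (j a.castSucc:ℤ)) = ((∑ a : Fin n, j a.castSucc : ℕ) : ℤ) := by
      unfold isum; push_cast; rfl
    have hcond : (0 : Fin n → ℤ) ≤ (fun a : Fin n => (i a.castSucc:ℤ))
        ∧ (fun a : Fin n => (i a.castSucc:ℤ)) ≤ (fun a : Fin n => (j a.castSucc:ℤ)) := by
      constructor
      · intro a; dsimp only; exact Int.natCast_nonneg _
      · intro a; dsimp only; exact_mod_cast hle a
    have h6 : ∀ a : Fin n, (((j a.castSucc:ℕ):ℤ) - ((i a.castSucc:ℕ):ℤ)).toNat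
        = j a.castSucc - i a.castSucc := fun a => by have := hle a; omega
    have hpM := qPoch_ne_zero hq M
    have hpic : (∏ a : Fin n, qPoch q (i a.castSucc)) ≠ 0 :=
      Finset.prod_ne_zero_iff.2 fun a _ => hpoch _
    have hpji : (∏ a : Fin n, qPoch q (j a.castSucc - i a.castSucc)) ≠ 0 :=
      Finset.prod_ne_zero_iff.2 fun a _ => hpoch _
    have claim2 : Npoly q Λ (n+1) M i *
          Phi q (fun a : Fin n => (i a.castSucc : ℤ)) (fun a : Fin n => (j a.castSucc : ℤ))
            (q ^ (-(M : ℤ))) Λ⁻¹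
        = q ^ ((∑ a : Fin n, (∑ b : Fin n, if b < a then j b.castSucc else 0) * i a.castSucc)
              + ∑ a : Fin n, ∑ k ∈ Finset.range (i a.castSucc), k)
          * ((-1) ^ (∑ a : Fin n, i a.castSucc) * Λ ^ (i (Fin.last n))
          * (qPochGen q Λ⁻¹ M * qPochGen q (Λ⁻¹ * q ^ M) (i (Fin.last n) - j (Fin.last n))
              / qPochGen q Λ⁻¹ (∑ a : Fin n, j a.castSucc))
          * ((∏ a : Fin n, qPoch q (j a.castSucc))
              / ∏ a : Fin n, qPoch q (j a.castSucc - i a.castSucc))) := by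
      unfold Npoly Phi
      rw [if_pos hcond]
      simp only [hisumγ, hisumβ, Int.toNat_natCast]
      rw [show (((∑ a : Fin n, j a.castSucc : ℕ):ℤ) - ((∑ a : Fin n, i a.castSucc : ℕ):ℤ)).toNat
            = i (Fin.last n) - j (Fin.last n) by omega]
      rw [show Λ⁻¹ / q ^ (-(M:ℤ)) = Λ⁻¹ * q ^ M by rw [div_eq_mul_inv, zpow_neg, inv_inv, zpow_natCast]]
      rw [prodC q hq0 hq (∑ a : Fin n, i a.castSucc) M hGM]
      rw [show M - (∑ a : Fin n, i a.castSucc) = i (Fin.last n) by omega]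
      rw [mul_pow, inv_pow, ← pow_mul]
      rw [Fin.prod_univ_castSucc (f := fun a : Fin (n+1) => qPoch q (i a))]
      simp only [h6, Int.toNat_natCast]
      rw [hqpow]
      rw [show Λ ^ M = Λ ^ (∑ a : Fin n, i a.castSucc) * Λ ^ (i (Fin.last n)) by
        rw [← pow_add, hil]]
      rw [Finset.prod_div_distrib, Finset.prod_mul_distrib]
      have hBnz' : qPochGen q (1 / Λ) (∑ a : Fin n, j a.castSucc) ≠ 0 := by
        rw [one_div]; exact hBnz
      field_simp
      rw [div_eq_iff (hpoch _)]
      ring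
    exact claim1.trans claim2.symm
  · -- degenerate case : some i_a > j_a, both sides vanish
    push_neg at hle
    obtain ⟨a, ha⟩ := hle
    have haa := a.isLt
    have hL : B2 q Λ (n+1) i j = 0 := by
      unfold B2
      apply Finset.prod_eq_zero (Finset.mem_univ a.castSucc)
      apply Finset.prod_eq_zero (Finset.mem_range.2 ha)
      simp only [Fin.coe_castSucc]
      rw [hz ((a:ℕ)+1), hz (a:ℕ), if_pos (by omega), if_pos (by omega), hSsucc a, pow_add]
      ring
    rw [hL]
    unfold Phi
    rw [if_neg, mul_zero]
    rintro ⟨-, h2⟩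
    have h3 := h2 a
    simp only at h3
    have h4 : i a.castSucc ≤ j a.castSucc := by exact_mod_cast h3
    omega

/-- **Lemma 3.3**: `B_{2,i}(z_j,Λ) = N_i(Λ)·Φ_q(ī|j̄; q^{−M}, Λ^{−1})`. -/
theorem B2_specialization (q : ℂ) (hq0 : q ≠ 0) (hq : ∀ m : ℕ, 0 < m → q ^ m ≠ 1)
    (N M : ℕ) [NeZero N] (Λ : ℂ) (hΛ0 : Λ ≠ 0) (hΛ : ∀ m : ℕ, m < M → Λ ≠ q ^ m)
    (i j : Fin N → ℕ) (hi : ∑ a, i a = M) (hj : ∑ a, j a = M) :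
    B2 q Λ N i j
      = Npoly q Λ N M i * Phi q (ibar N i) (ibar N j) (q ^ (-(M : ℤ))) Λ⁻¹ := by
  obtain ⟨n, rfl⟩ : ∃ n, N = n + 1 := ⟨N - 1, (Nat.succ_pred_eq_of_pos (NeZero.pos N)).symm⟩
  have hcast : ∀ (f : Fin (n+1) → ℕ),
      ibar (n+1) f = fun a : Fin n => (f a.castSucc : ℤ) := by
    intro f
    funext a
    unfold ibar
    congr 1
    congr 1
    apply Fin.ext
    rw [Fin.val_cast_of_lt (Nat.lt_succ_of_lt a.isLt)]
    rfl
  rw [hcast i, hcast j]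
  exact mainAux q hq0 hq n M Λ hΛ0 hΛ i j hi hj
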